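/- Let n ≥ 2 and 1 ≤ k ≤ n−1, and let D = C_n(1,2,…,k) be the k-circulant digraph on vertices ℤ/nℤ with edges (i, i+a mod n) for a = 1,…,k. Let F ∈ ℕ and let L ⊆ V be a set of leaders. If there exists a set P_L of consecutive vertices (modulo n) with |P_L| ≤ k and |P_L ∩ L| ≥ 2F+1, then D is strongly (2F+1)-robust with respect to L: every nonempty subset C ⊆ V \ L contains a vertex with at least 2F+1 in-neighbors outside C. -/

import Mathlib

/-- Theorem 3 (first part): the k-circulant digraph C_n(1,…,k) on ℤ/nℤ
(in-neighbors of j are j-1,…,j-k mod n) is strongly (2F+1)-robust w.r.t. the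
leader set L whenever it contains a set P_L of consecutive vertices (mod n)
with |P_L| ≤ k and |P_L ∩ L| ≥ 2F+1. -/
theorem kcirculant_strongly_robust (n k F : ℕ)
    (hn : 2 ≤ n) (hk1 : 1 ≤ k) (hkn : k ≤ n - 1)
    (L PL : Finset (ZMod n))
    (hconsec : ∃ (m : ZMod n) (ℓ : ℕ),
      PL = (Finset.range ℓ).image (fun t : ℕ => m + (t : ZMod n)))
    (hPLcard : PL.card ≤ k)
    (hPLL : 2 * F + 1 ≤ (PL ∩ L).card) :
    ∀ C : Finset (ZMod n), (∀ i ∈ C, i ∉ L) → C.Nonempty →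
      ∃ i ∈ C, 2 * F + 1 ≤
        (((Finset.Icc 1 k).image (fun a : ℕ => i - (a : ZMod n))) \ C).card := by
  haveI : NeZero n := ⟨by omega⟩
  obtain ⟨m, ℓ, hPL⟩ := hconsec
  have hkltn : k < n := by omega
  have h2Fk : 2 * F + 1 ≤ k :=
    le_trans hPLL (le_trans (Finset.card_le_card Finset.inter_subset_left) hPLcard)
  -- ℓ < n
  have hln : ℓ < n := by
    by_contra h
    push_neg at h
    have huniv : PL = Finset.univ := by
      apply Finset.eq_univ_of_forall
      intro x
      rw [hPL]
      refine Finset.mem_image.2 ⟨(x - m).val, ?_, ?_⟩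
      · exact Finset.mem_range.2 (lt_of_lt_of_le (ZMod.val_lt _) h)
      · rw [ZMod.natCast_val, ZMod.cast_id]; ring
    rw [huniv, Finset.card_univ, ZMod.card] at hPLcard
    omega
  -- ℓ ≤ k
  have hlk : ℓ ≤ k := by
    have hc : PL.card = ℓ := by
      rw [hPL, Finset.card_image_of_injOn, Finset.card_range]
      intro a ha b hb hab
      simp only [Finset.coe_range, Set.mem_Iio] at ha hb
      have h1 : ((a : ℕ) : ZMod n) = (b : ℕ) := by
        exact add_left_cancel hab
      have := congrArg ZMod.val h1
      rwa [ZMod.val_cast_of_lt (by omega), ZMod.val_cast_of_lt (by omega)] at this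
    omega
  intro C hCL hCne
  obtain ⟨i, hiC, hmin⟩ := C.exists_min_image (fun x => (x - m - (ℓ : ℕ)).val) hCne
  refine ⟨i, hiC, ?_⟩
  set s : ℕ := (i - m - (ℓ : ℕ)).val with hs_def
  have hsn : s < n := ZMod.val_lt _
  have hscast : ((s : ℕ) : ZMod n) = i - m - (ℓ : ℕ) := by
    rw [hs_def, ZMod.natCast_val, ZMod.cast_id]
  have i_eq : i = m + (ℓ : ℕ) + (s : ℕ) := by rw [hscast]; ring
  have notC : ∀ j : ℕ, j < s → (m + (ℓ : ℕ) + (j : ℕ) : ZMod n) ∉ C := by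
    intro j hj hjC
    have h2 := hmin _ hjC
    have h3 : (m + (ℓ : ℕ) + (j : ℕ) - m - (ℓ : ℕ) : ZMod n) = (j : ℕ) := by ring
    rw [h3, ZMod.val_cast_of_lt (by omega)] at h2
    omega
  have winj : Set.InjOn (fun a : ℕ => i - (a : ZMod n)) ↑(Finset.Icc 1 k) := by
    intro a ha b hb hab
    simp only [Finset.coe_Icc, Set.mem_Icc] at ha hb
    have h1 : ((a : ℕ) : ZMod n) = (b : ℕ) := by
      simp only at hab
      linear_combination -hab
    have := congrArg ZMod.val h1
    rwa [ZMod.val_cast_of_lt (by omega), ZMod.val_cast_of_lt (by omega)] at this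
  -- facts about members of PL ∩ L
  have hmem : ∀ p ∈ PL ∩ L, (p - m).val < ℓ ∧ p = m + ((p - m).val : ZMod n) := by
    intro p hp
    have hpPL : p ∈ PL := Finset.mem_inter.1 hp |>.1
    rw [hPL] at hpPL
    obtain ⟨t₀, ht₀, hpe⟩ := Finset.mem_image.1 hpPL
    rw [Finset.mem_range] at ht₀
    have hv : (p - m).val = t₀ := by
      rw [← hpe]
      have : (m + (t₀ : ZMod n) - m) = (t₀ : ZMod n) := by ring
      rw [this, ZMod.val_cast_of_lt (by omega)]
    constructor
    · omega
    · rw [hv, ← hpe]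
  rcases le_or_gt k s with hks | hsk
  · -- case s ≥ k : all window vertices are outside C
    have hWC : Disjoint ((Finset.Icc 1 k).image (fun a : ℕ => i - (a : ZMod n))) C := by
      rw [Finset.disjoint_left]
      intro x hx hxC
      obtain ⟨a, ha, rfl⟩ := Finset.mem_image.1 hx
      simp only [Finset.mem_Icc] at ha
      have hx2 : (i - (a : ℕ) : ZMod n) = m + (ℓ : ℕ) + ((s - a : ℕ) : ZMod n) := by
        rw [i_eq, Nat.cast_sub (by omega)]
        ring
      exact notC (s - a) (by omega) (hx2 ▸ hxC)
    rw [Finset.sdiff_eq_self_of_disjoint hWC, Finset.card_image_of_injOn winj,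
      Nat.card_Icc]
    omega
  · -- case s < k : build an injection from PL ∩ L into the window minus C
    refine le_trans hPLL (Finset.card_le_card_of_injOn
      (fun p => if ℓ + s - (p - m).val ≤ k then i - ((ℓ + s - (p - m).val : ℕ) : ZMod n)
                else i - ((s - (p - m).val : ℕ) : ZMod n)) ?_ ?_)
    · intro p hp
      obtain ⟨htl, hpe⟩ := hmem p hp
      have hpL : p ∈ L := Finset.mem_inter.1 hp |>.2
      set t : ℕ := (p - m).val with ht_def
      rw [Finset.mem_coe, Finset.mem_sdiff]
      dsimp only
      rw [← ht_def]
      split_ifs with hcase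
      · -- g p = p, a leader in the window
        have hgp : (i - ((ℓ + s - t : ℕ) : ZMod n)) = p := by
          rw [i_eq, Nat.cast_sub (by omega), hpe]
          push_cast
          ring
        constructor
        · refine Finset.mem_image.2 ⟨ℓ + s - t, Finset.mem_Icc.2 ⟨by omega, hcase⟩, ?_⟩
          exact hgp ▸ rfl
        · rw [hgp]
          exact fun hc => hCL p hc hpL
      · -- g p = m + ℓ + t, not in C by minimality
        have htk : t < s := by omega
        have key : (i - ((s - t : ℕ) : ZMod n)) = m + (ℓ : ℕ) + ((t : ℕ) : ZMod n) := by
          rw [i_eq, Nat.cast_sub (by omega)]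
          ring
        constructor
        · exact Finset.mem_image.2 ⟨s - t, Finset.mem_Icc.2 ⟨by omega, by omega⟩, rfl⟩
        · rw [key]
          exact notC t htk
    · -- injectivity
      intro p hp q hq hpq
      obtain ⟨htlp, hpep⟩ := hmem p hp
      obtain ⟨htlq, hpeq⟩ := hmem q hq
      set tp : ℕ := (p - m).val with htp_def
      set tq : ℕ := (q - m).val with htq_def
      simp only at hpq
      have heq : ∀ a b : ℕ, a ∈ Finset.Icc 1 k → b ∈ Finset.Icc 1 k →
          i - (a : ZMod n) = i - (b : ZMod n) → a = b := by
        intro a b ha hb h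
        exact winj (Finset.mem_coe.2 ha) (Finset.mem_coe.2 hb) h
      have htpq : tp = tq := by
        split_ifs at hpq with h1 h2 h2
        · have := heq _ _ (Finset.mem_Icc.2 ⟨by omega, h1⟩)
            (Finset.mem_Icc.2 ⟨by omega, h2⟩) hpq
          omega
        · have := heq _ _ (Finset.mem_Icc.2 ⟨by omega, h1⟩)
            (Finset.mem_Icc.2 ⟨by omega, by omega⟩) hpq
          omega
        · have := heq _ _ (Finset.mem_Icc.2 ⟨by omega, by omega⟩)
            (Finset.mem_Icc.2 ⟨by omega, h2⟩) hpq
          omega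
        · have := heq _ _ (Finset.mem_Icc.2 ⟨by omega, by omega⟩)
            (Finset.mem_Icc.2 ⟨by omega, by omega⟩) hpq
          omega
      rw [hpep, hpeq, htpq]
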